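/- If {Pᵢ} is an increasing sequence and {Qᵢ} a decreasing sequence of quantum predicates (with respect to the Loewner order), then the pairwise supremum ⋁ᵢ(Pᵢ,Qᵢ) = (⋁ᵢPᵢ, ⋀ᵢQᵢ) exists with respect to the order ⊴; in particular ⋀ᵢQᵢ exists and equals I − ⋁ᵢ(I − Qᵢ). -/

import Mathlib

noncomputable def trR {E : Type*} [NormedAddCommGroup E] [InnerProductSpace ℂ E]
    {ι : Type*} (b : HilbertBasis ι ℂ E) (A : E →L[ℂ] E) : ℝ :=
  ∑' i, (inner ℂ (b i) (A (b i)) : ℂ).re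

def IsTraceClassDiag {E : Type*} [NormedAddCommGroup E] [InnerProductSpace ℂ E]
    {ι : Type*} (b : HilbertBasis ι ℂ E) (A : E →L[ℂ] E) : Prop :=
  Summable fun i => (inner ℂ (b i) (A (b i)) : ℂ).re

/-- The Loewner order: `A ⊑ B` iff `B - A` is a positive operator. -/
def Loe {E : Type*} [NormedAddCommGroup E] [InnerProductSpace ℂ E] [CompleteSpace E]
    (A B : E →L[ℂ] E) : Prop := (B - A).IsPositive

/-- A quantum predicate: `0 ⊑ P ⊑ I`. -/
def IsPredicate {E : Type*} [NormedAddCommGroup E] [InnerProductSpace ℂ E] [CompleteSpace E]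
    (P : E →L[ℂ] E) : Prop := P.IsPositive ∧ (1 - P).IsPositive

/-- Least upper bound of a sequence of operators in the Loewner order. -/
def IsLubSeq {E : Type*} [NormedAddCommGroup E] [InnerProductSpace ℂ E] [CompleteSpace E]
    (f : ℕ → E →L[ℂ] E) (S : E →L[ℂ] E) : Prop :=
  (∀ n, Loe (f n) S) ∧ ∀ T, (∀ n, Loe (f n) T) → Loe S T

/-- Greatest lower bound of a sequence of operators in the Loewner order. -/
def IsGlbSeq {E : Type*} [NormedAddCommGroup E] [InnerProductSpace ℂ E] [CompleteSpace E]
    (f : ℕ → E →L[ℂ] E) (S : E →L[ℂ] E) : Prop :=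
  (∀ n, Loe S (f n)) ∧ ∀ T, (∀ n, Loe T (f n)) → Loe T S

/-- The order `⊴` on pairs: `(P,Q) ⊴ (P',Q')` iff `P ⊑ P'` and `Q' ⊑ Q`. -/
def TLe {E : Type*} [NormedAddCommGroup E] [InnerProductSpace ℂ E] [CompleteSpace E]
    (x y : (E →L[ℂ] E) × (E →L[ℂ] E)) : Prop := Loe x.1 y.1 ∧ Loe y.2 x.2

/-- Least upper bound of a sequence of pairs w.r.t. `⊴`. -/
def IsLubPairSeq {E : Type*} [NormedAddCommGroup E] [InnerProductSpace ℂ E] [CompleteSpace E]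
    (f : ℕ → (E →L[ℂ] E) × (E →L[ℂ] E)) (S : (E →L[ℂ] E) × (E →L[ℂ] E)) : Prop :=
  (∀ n, TLe (f n) S) ∧ ∀ T, (∀ n, TLe (f n) T) → TLe S T

private lemma loe_iff_le {E : Type*} [NormedAddCommGroup E] [InnerProductSpace ℂ E]
    [CompleteSpace E] (A B : E →L[ℂ] E) : Loe A B ↔ A ≤ B :=
  (ContinuousLinearMap.le_def A B).symm

private lemma loe_one_sub {E : Type*} [NormedAddCommGroup E] [InnerProductSpace ℂ E]
    [CompleteSpace E] {A B : E →L[ℂ] E} (h : Loe A B) : Loe (1 - B) (1 - A) := by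
  unfold Loe at *
  have e : (1 - A) - (1 - B) = B - A := by abel
  rw [e]; exact h

theorem stmt10 {E : Type*} [NormedAddCommGroup E] [InnerProductSpace ℂ E]
    [CompleteSpace E]
    -- ω-completeness of the Loewner order on predicates: every increasing sequence of
    -- self-adjoint operators bounded above has a least upper bound.
    (hcpo : ∀ (f : ℕ → E →L[ℂ] E) (C : E →L[ℂ] E), (∀ n, IsSelfAdjoint (f n)) →
      (∀ n, Loe (f n) (f (n + 1))) → (∀ n, Loe (f n) C) → ∃ S, IsLubSeq f S)
    (P Q : ℕ → E →L[ℂ] E)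
    (hP : ∀ n, IsPredicate (P n)) (hQ : ∀ n, IsPredicate (Q n))
    (hPmono : ∀ n, Loe (P n) (P (n + 1))) (hQanti : ∀ n, Loe (Q (n + 1)) (Q n)) :
    ∃ S T : E →L[ℂ] E, IsLubSeq P S ∧ IsGlbSeq Q T ∧
      IsLubPairSeq (fun n => (P n, Q n)) (S, T) ∧
      ∀ S', IsLubSeq (fun n => 1 - Q n) S' → T = 1 - S' := by
  have hSA : ∀ n, IsSelfAdjoint (P n) := fun n => (hP n).1.isSelfAdjoint
  have hPbd : ∀ n, Loe (P n) 1 := fun n => by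
    have := (hP n).2; unfold Loe; exact this
  obtain ⟨S, hS⟩ := hcpo P 1 hSA hPmono hPbd
  set f : ℕ → E →L[ℂ] E := fun n => 1 - Q n with hf
  have hfSA : ∀ n, IsSelfAdjoint (f n) := fun n => (hQ n).2.isSelfAdjoint
  have hfmono : ∀ n, Loe (f n) (f (n + 1)) := fun n => loe_one_sub (hQanti n)
  have hfbd : ∀ n, Loe (f n) 1 := fun n => by
    have := (hQ n).1
    unfold Loe
    have e : (1 : E →L[ℂ] E) - (1 - Q n) = Q n := by abel
    rw [e]; exact this
  obtain ⟨S₀, hS₀⟩ := hcpo f 1 hfSA hfmono hfbd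
  refine ⟨S, 1 - S₀, hS, ?_, ?_, ?_⟩
  · constructor
    · intro n
      have := hS₀.1 n
      unfold Loe at this ⊢
      have e : Q n - (1 - S₀) = S₀ - (1 - Q n) := by abel
      rw [e]; exact this
    · intro T' hT'
      have h1 : ∀ n, Loe (f n) (1 - T') := fun n => loe_one_sub (hT' n)
      have h2 := hS₀.2 _ h1
      unfold Loe at h2 ⊢
      have e : (1 - S₀) - T' = (1 - T') - S₀ := by abel
      rw [e]; exact h2
  · constructor
    · intro n
      exact ⟨hS.1 n, by
        have := hS₀.1 n
        unfold Loe at this ⊢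
        have e : Q n - (1 - S₀) = S₀ - (1 - Q n) := by abel
        rw [e]; exact this⟩
    · intro T' hT'
      refine ⟨hS.2 _ fun n => (hT' n).1, ?_⟩
      have h1 : ∀ n, Loe (f n) (1 - T'.2) := fun n => loe_one_sub (hT' n).2
      have h2 := hS₀.2 _ h1
      unfold Loe at h2 ⊢
      have e : (1 - S₀) - T'.2 = (1 - T'.2) - S₀ := by abel
      rw [e]; exact h2
  · intro S' hS'
    have h1 : S₀ ≤ S' := (loe_iff_le _ _).mp (hS₀.2 _ hS'.1)
    have h2 : S' ≤ S₀ := (loe_iff_le _ _).mp (hS'.2 _ hS₀.1)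
    rw [le_antisymm h1 h2]
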